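/- For μ > 0, ν > −1, and nonnegative integer k, with χ ≥ 0, the derivative at ε = 0 of the function ε ↦ ₁F₂(ε; 1−μ+ε, 1+ν; χ) satisfies: ₁F₂(ε; 1−μ+ε, 1+ν; χ) = 1 + ε χ Γ(1−μ)Γ(1+ν) ₂**F**₃(1,1; 2, 2−μ, 2+ν; χ) + O(ε²) as ε → 0, where ₂**F**₃ is the regularized hypergeometric function ∑_{n=0}^∞ (1)_n (1)_n χ^n/(Γ(2+n)Γ(2−μ+n)Γ(2+ν+n) n!) and μ is not a positive integer. -/

import Mathlib

open Real Filter Asymptotics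

noncomputable def poch (a : ℝ) (n : ℕ) : ℝ := ∏ j ∈ Finset.range n, (a + j)

lemma poch_zero (a : ℝ) : poch a 0 = 1 := by simp [poch]

lemma poch_succ (a : ℝ) (n : ℕ) : poch a (n+1) = poch a n * (a + n) :=
  Finset.prod_range_succ _ _

lemma poch_succ' (a : ℝ) (n : ℕ) : poch a (n+1) = a * poch (a+1) n := by
  unfold poch
  rw [Finset.prod_range_succ']
  rw [Finset.prod_congr rfl (fun x _ => show a + ((x:ℕ)+1:ℕ) = (a+1) + x by push_cast; ring)]
  push_cast
  ring

lemma poch_one (n : ℕ) : poch 1 n = n.factorial := by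
  induction n with
  | zero => simp [poch]
  | succ n ih => rw [poch_succ, ih, Nat.factorial_succ]; push_cast; ring

lemma poch_two (n : ℕ) : poch 2 n = (n+1).factorial := by
  have := poch_succ' 1 n
  rw [poch_one] at this
  norm_num at this
  rw [← this]

lemma poch_pos {a : ℝ} (h : 0 < a) (n : ℕ) : 0 < poch a n :=
  Finset.prod_pos fun j _ => by positivity

lemma abs_poch (a : ℝ) (n : ℕ) : |poch a n| = ∏ j ∈ Finset.range n, |a + j| :=
  Finset.abs_prod _ _

lemma poch_ne_zero {a : ℝ} (h : ∀ j : ℕ, a + j ≠ 0) (n : ℕ) : poch a n ≠ 0 :=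
  Finset.prod_ne_zero_iff.mpr fun j _ => h j

lemma prod_diff_le (n : ℕ) (a b A : ℕ → ℝ) (e : ℝ) (he : 0 ≤ e)
    (hA : ∀ j, 1 ≤ A j) (ha : ∀ j, |a j| ≤ A j) (hb : ∀ j, |b j| ≤ A j)
    (hab : ∀ j, |a j - b j| ≤ e) :
    |∏ j ∈ Finset.range n, a j - ∏ j ∈ Finset.range n, b j| ≤
      e * n * ∏ j ∈ Finset.range n, A j := by
  induction n with
  | zero => simp
  | succ n ih =>
    rw [Finset.prod_range_succ, Finset.prod_range_succ, Finset.prod_range_succ]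
    have hPA1 : (1:ℝ) ≤ ∏ j ∈ Finset.range n, A j := by
      calc (1:ℝ) = ∏ _j ∈ Finset.range n, (1:ℝ) := by simp
        _ ≤ ∏ j ∈ Finset.range n, A j :=
          Finset.prod_le_prod (fun j _ => zero_le_one) (fun j _ => hA j)
    have hPA0 : (0:ℝ) ≤ ∏ j ∈ Finset.range n, A j := le_trans zero_le_one hPA1
    have hPb : |∏ j ∈ Finset.range n, b j| ≤ ∏ j ∈ Finset.range n, A j := by
      rw [Finset.abs_prod]
      exact Finset.prod_le_prod (fun j _ => abs_nonneg _) (fun j _ => hb j)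
    have key : (∏ j ∈ Finset.range n, a j) * a n - (∏ j ∈ Finset.range n, b j) * b n
        = a n * ((∏ j ∈ Finset.range n, a j) - ∏ j ∈ Finset.range n, b j)
          + (a n - b n) * ∏ j ∈ Finset.range n, b j := by ring
    rw [key]
    calc |a n * ((∏ j ∈ Finset.range n, a j) - ∏ j ∈ Finset.range n, b j)
          + (a n - b n) * ∏ j ∈ Finset.range n, b j|
        ≤ |a n| * |(∏ j ∈ Finset.range n, a j) - ∏ j ∈ Finset.range n, b j|
          + |a n - b n| * |∏ j ∈ Finset.range n, b j| := by
          refine le_trans (abs_add_le _ _) ?_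
          rw [abs_mul, abs_mul]
      _ ≤ A n * (e * n * ∏ j ∈ Finset.range n, A j)
          + e * ∏ j ∈ Finset.range n, A j := by
          refine add_le_add ?_ ?_
          · exact mul_le_mul (ha n) ih (abs_nonneg _) (le_trans (abs_nonneg _) (ha n))
          · exact mul_le_mul (hab n) hPb (abs_nonneg _) he
      _ ≤ e * (n+1) * ((∏ j ∈ Finset.range n, A j) * A n) := by
          have h1 : (1:ℝ) ≤ A n := hA n
          nlinarith [mul_nonneg he hPA0, mul_nonneg (mul_nonneg he hPA0) (Nat.cast_nonneg n : (0:ℝ) ≤ n)]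
      _ = e * (↑(n+1)) * ((∏ j ∈ Finset.range n, A j) * A n) := by push_cast; ring

lemma Gamma_add_nat (a : ℝ) (n : ℕ) (h : ∀ j : ℕ, j < n → a + j ≠ 0) :
    Real.Gamma (a + n) = poch a n * Real.Gamma a := by
  induction n with
  | zero => simp [poch]
  | succ n ih =>
    have h1 : a + n ≠ 0 := h n (by omega)
    have e : a + ((n:ℕ)+1:ℕ) = (a + n) + 1 := by push_cast; ring
    rw [e, Real.Gamma_add_one h1, ih (fun j hj => h j (by omega)), poch_succ]
    ring

set_option maxHeartbeats 1000000 in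
theorem hyp1F2_epsilon_expansion (μ ν χ : ℝ) (hμ0 : 0 < μ) (hν : -1 < ν) (hχ : 0 ≤ χ)
    (hμ : ∀ n : ℕ, μ ≠ (n : ℝ) + 1) :
    (fun ε : ℝ =>
        (∑' n : ℕ, poch ε n * χ ^ n /
            (poch (1 - μ + ε) n * poch (1 + ν) n * n.factorial)) -
          1 - ε * χ * Real.Gamma (1 - μ) * Real.Gamma (1 + ν) *
            (∑' n : ℕ, poch 1 n * poch 1 n * χ ^ n /
              (Real.Gamma (2 + n) * Real.Gamma (2 - μ + n) * Real.Gamma (2 + ν + n) *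
                n.factorial)))
      =O[nhds (0 : ℝ)] (fun ε : ℝ => ε ^ 2) := by
  -- basic nonvanishing facts
  have hμj : ∀ j : ℕ, 1 - μ + j ≠ 0 := by
    intro j h; exact hμ j (by linarith)
  have hνj : ∀ j : ℕ, 0 < 1 + ν + j := by
    intro j; have : (0:ℝ) ≤ j := Nat.cast_nonneg j; linarith
  have hνpos : (0:ℝ) < 1 + ν := by linarith
  -- the constant d : uniform lower bound for |1 - μ + j|
  set N := ⌈μ⌉₊ with hNdef
  have hN1 : 1 ≤ N := Nat.one_le_ceil_iff.mpr hμ0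
  have hne : (Finset.range N).Nonempty := Finset.nonempty_range_iff.mpr (by omega)
  set d : ℝ := min 1 ((Finset.range N).inf' hne (fun j => |1 - μ + j|)) with hddef
  have hd0 : 0 < d := by
    refine lt_min one_pos ?_
    rw [Finset.lt_inf'_iff]
    exact fun j _ => abs_pos.mpr (hμj j)
  have hdle : ∀ j : ℕ, d ≤ |1 - μ + j| := by
    intro j
    by_cases hj : j < N
    · exact le_trans (min_le_right _ _) (Finset.inf'_le _ (Finset.mem_range.mpr hj))
    · have h1 : (N:ℝ) ≤ j := Nat.cast_le.mpr (by omega)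
      have h2 : μ ≤ N := Nat.le_ceil μ
      have h3 : (1:ℝ) ≤ 1 - μ + j := by linarith
      calc d ≤ 1 := min_le_left _ _
        _ ≤ |1 - μ + j| := le_trans h3 (le_abs_self _)
  set c : ℝ := |1 - μ| + 1 with hcdef
  have hc1 : (1:ℝ) ≤ c := by have := abs_nonneg (1 - μ); rw [hcdef]; linarith
  have hcpos : (0:ℝ) < c := lt_of_lt_of_le one_pos hc1
  set δ : ℝ := min (1/2 : ℝ) (d/2) with hδdef
  have hδ0 : 0 < δ := lt_min (by norm_num) (by linarith)
  -- the coefficient sequences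
  set a' : ℕ → ℝ := fun k =>
    k.factorial * χ^(k+1) / (poch (1-μ) (k+1) * poch (1+ν) (k+1) * (k+1).factorial)
    with ha'def
  set C : ℕ → ℝ := fun k =>
    χ^(k+1) * 2^(k+2) * (k+1) * poch c (k+1) /
      ((poch (1-μ) (k+1))^2 * poch (1+ν) (k+1)) with hCdef
  have hD0ne : ∀ n : ℕ, poch (1-μ) n ≠ 0 := fun n => poch_ne_zero hμj n
  have hBpos : ∀ n : ℕ, 0 < poch (1+ν) n := fun n => poch_pos hνpos n
  have hpcpos : ∀ n : ℕ, 0 < poch c n := fun n => poch_pos hcpos n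
  have hsqpos : ∀ k : ℕ, 0 < (poch (1-μ) (k+1))^2 :=
    fun k => pow_two_pos_of_ne_zero (hD0ne (k+1))
  have hC0 : ∀ k, 0 ≤ C k := by
    intro k
    apply div_nonneg
    · have := (hpcpos (k+1)).le
      positivity
    · have := hsqpos k
      have := hBpos (k+1)
      positivity
  have hCsum : Summable C := by
    rcases eq_or_lt_of_le hχ with hχ0 | hχpos
    · have : C = fun _ => 0 := by
        funext k
        rw [hCdef]
        simp [← hχ0, zero_pow (Nat.succ_ne_zero k)]
      rw [this]; exact summable_zero
    · -- ratio test
      set g : ℕ → ℝ := fun k =>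
        2 * χ * (((k:ℝ)+2)/((k:ℝ)+1)) * ((c + ((k:ℝ)+1))/(1+ν+((k:ℝ)+1)))
          * (1/(1-μ+((k:ℝ)+1)))^2 with hgdef
      have hCg : ∀ k, C (k+1) = C k * g k := by
        intro k
        have e1 : poch c (k+2) = poch c (k+1) * (c + (k+1)) := by
          have := poch_succ c (k+1); push_cast at this ⊢; linarith [this]
        have e2 : poch (1-μ) (k+2) = poch (1-μ) (k+1) * (1-μ+(k+1)) := by
          have := poch_succ (1-μ) (k+1); push_cast at this ⊢; linarith [this]
        have e3 : poch (1+ν) (k+2) = poch (1+ν) (k+1) * (1+ν+(k+1)) := by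
          have := poch_succ (1+ν) (k+1); push_cast at this ⊢; linarith [this]
        have hk1 : ((k:ℝ)+1) ≠ 0 := by positivity
        have hmk : (1-μ+((k:ℝ)+1)) ≠ 0 := by
          intro h; exact hμ (k+1) (by push_cast; linarith)
        have hnk : (1+ν+((k:ℝ)+1)) ≠ 0 := by have := hνj (k+1); push_cast at this; positivity
        rw [hCdef, hgdef]
        simp only
        rw [e1, e2, e3]
        have hD := hD0ne (k+1)
        have hB := (hBpos (k+1)).ne'
        field_simp
        push_cast
        ring
      have hgto : Tendsto g atTop (nhds 0) := by
        have hk1 : Tendsto (fun k : ℕ => (k:ℝ)+1) atTop atTop :=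
          tendsto_atTop_add_const_right _ 1 tendsto_natCast_atTop_atTop
        have hA : Tendsto (fun k : ℕ => ((k:ℝ)+2)/((k:ℝ)+1)) atTop (nhds 1) := by
          have he : (fun k : ℕ => ((k:ℝ)+2)/((k:ℝ)+1)) = fun k : ℕ => 1 + ((k:ℝ)+1)⁻¹ := by
            funext k
            have : ((k:ℝ)+1) ≠ 0 := by positivity
            field_simp
            ring
          rw [he]
          simpa using (tendsto_const_nhds (x := (1:ℝ))).add hk1.inv_tendsto_atTop
        have hnk : Tendsto (fun k : ℕ => 1+ν+((k:ℝ)+1)) atTop atTop :=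
          tendsto_atTop_add_const_left _ _ hk1
        have hB : Tendsto (fun k : ℕ => (c + ((k:ℝ)+1))/(1+ν+((k:ℝ)+1))) atTop (nhds 1) := by
          have he : (fun k : ℕ => (c + ((k:ℝ)+1))/(1+ν+((k:ℝ)+1)))
              = fun k : ℕ => 1 + (c - 1 - ν) * (1+ν+((k:ℝ)+1))⁻¹ := by
            funext k
            have h := hνj (k+1)
            push_cast at h
            have : (1+ν+((k:ℝ)+1)) ≠ 0 := by positivity
            field_simp
            ring
          rw [he]
          simpa using (tendsto_const_nhds (x := (1:ℝ))).add
            ((tendsto_const_nhds (x := (c - 1 - ν))).mul hnk.inv_tendsto_atTop)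
        have hmk : Tendsto (fun k : ℕ => 1-μ+((k:ℝ)+1)) atTop atTop :=
          tendsto_atTop_add_const_left _ _ hk1
        have hE : Tendsto (fun k : ℕ => (1/(1-μ+((k:ℝ)+1)))^2) atTop (nhds 0) := by
          have h0 : Tendsto (fun k : ℕ => 1/(1-μ+((k:ℝ)+1))) atTop (nhds 0) := by
            exact hmk.inv_tendsto_atTop.congr (fun k => (one_div _).symm)
          have := h0.pow 2
          simpa using this
        rw [hgdef]
        have h := (((tendsto_const_nhds (x := (2*χ : ℝ)) (f := (atTop : Filter ℕ))).mul hA).mul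
          hB).mul hE
        simp only [mul_one, mul_zero] at h
        exact h
      have hev : ∀ᶠ k in atTop, g k < 1/2 := hgto.eventually_lt_const (by norm_num)
      refine summable_of_ratio_norm_eventually_le (r := 1/2) (by norm_num) ?_
      filter_upwards [hev] with k hk
      have hg0 : 0 ≤ g k := by
        rw [hgdef]
        have h1 : (0:ℝ) < 1+ν+((k:ℝ)+1) := by have := hνj (k+1); push_cast at this; linarith
        have h2 : (0:ℝ) ≤ c + ((k:ℝ)+1) := by positivity
        positivity
      rw [Real.norm_eq_abs, Real.norm_eq_abs, abs_of_nonneg (hC0 (k+1)), abs_of_nonneg (hC0 k),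
        hCg k]
      calc C k * g k ≤ C k * (1/2) := by
            exact mul_le_mul_of_nonneg_left (le_of_lt hk) (hC0 k)
        _ = 1/2 * C k := by ring
  -- |D0| ≤ poch c  and (k+1)! ≤ poch c
  have habsD0le : ∀ n : ℕ, |poch (1-μ) n| ≤ poch c n := by
    intro n
    rw [abs_poch]
    refine Finset.prod_le_prod (fun j _ => abs_nonneg _) (fun j _ => ?_)
    calc |1 - μ + (j:ℝ)| ≤ |1 - μ| + |(j:ℝ)| := abs_add_le _ _
      _ ≤ c + j := by
        rw [Nat.abs_cast]
        rw [hcdef]; linarith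
  have hfacle : ∀ n : ℕ, (n.factorial : ℝ) ≤ poch c n := by
    intro n
    rw [← poch_one n]
    unfold poch
    refine Finset.prod_le_prod (fun j _ => by positivity) (fun j _ => by rw [hcdef]; linarith)
  have ha'C : ∀ k, |a' k| ≤ C k := by
    intro k
    have hD0 : poch (1-μ) (k+1) ≠ 0 := hD0ne (k+1)
    have hD0abs : 0 < |poch (1-μ) (k+1)| := abs_pos.mpr hD0
    have hB := hBpos (k+1)
    have hF : (0:ℝ) < ((k+1).factorial : ℕ) := by positivity
    have hnum : 0 ≤ (k.factorial : ℝ) * χ^(k+1) := by positivity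
    have habs : |a' k| = (k.factorial : ℝ) * χ^(k+1) /
        (|poch (1-μ) (k+1)| * poch (1+ν) (k+1) * ((k+1).factorial : ℕ)) := by
      rw [ha'def]
      simp only
      rw [abs_div, abs_of_nonneg hnum, abs_mul, abs_mul, abs_of_pos hB,
        abs_of_nonneg (le_of_lt hF)]
    rw [habs, hCdef]
    simp only
    rw [div_le_div_iff₀ (by positivity) (by
      have := hsqpos k
      positivity)]
    have hsq : (poch (1-μ) (k+1))^2 = |poch (1-μ) (k+1)|^2 := (sq_abs _).symm
    rw [hsq]
    have h1 : (k.factorial:ℝ) ≤ (k+1).factorial := by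
      exact_mod_cast Nat.factorial_le (Nat.le_succ k)
    have h2 : |poch (1-μ) (k+1)| ≤ poch c (k+1) := habsD0le (k+1)
    have h3 : (1:ℝ) ≤ 2^(k+2) * ((k:ℝ)+1) := by
      have e1 : (1:ℝ) ≤ 2^(k+2) := one_le_pow₀ (by norm_num)
      have e2 : (1:ℝ) ≤ ((k:ℝ)+1) := by
        have := Nat.cast_nonneg (α := ℝ) k; linarith
      nlinarith
    calc (k.factorial : ℝ) * χ^(k+1) * (|poch (1-μ) (k+1)|^2 * poch (1+ν) (k+1))
        ≤ ((k+1).factorial : ℝ) * χ^(k+1) * ((poch c (k+1) * |poch (1-μ) (k+1)|) * poch (1+ν) (k+1)) := by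
          have := hpcpos (k+1)
          gcongr
          rw [sq]
          exact mul_le_mul_of_nonneg_right h2 (abs_nonneg _)
      _ = χ^(k+1) * 1 * poch c (k+1) * (|poch (1-μ) (k+1)| * poch (1+ν) (k+1) * ((k+1).factorial : ℕ)) := by
          push_cast; ring
      _ ≤ χ^(k+1) * (2^(k+2) * ((k:ℝ)+1)) * poch c (k+1) * (|poch (1-μ) (k+1)| * poch (1+ν) (k+1) * ((k+1).factorial : ℕ)) := by
          have hc' := (hpcpos (k+1)).le
          have hx : (0:ℝ) ≤ |poch (1-μ) (k+1)| * poch (1+ν) (k+1) * ((k+1).factorial : ℕ) := by positivity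
          gcongr
      _ = χ^(k+1) * 2^(k+2) * ((k:ℝ)+1) * poch c (k+1) * (|poch (1-μ) (k+1)| * poch (1+ν) (k+1) * ((k+1).factorial : ℕ)) := by ring
  have ha'sum : Summable a' := by
    refine Summable.of_norm_bounded hCsum ?_
    intro k
    rw [Real.norm_eq_abs]
    exact ha'C k
  -- the key termwise second-order bound
  have hkey : ∀ ε : ℝ, |ε| ≤ δ → ∀ k : ℕ,
      |poch ε (k+1) * χ^(k+1) /
          (poch (1-μ+ε) (k+1) * poch (1+ν) (k+1) * ((k+1).factorial : ℝ))
        - ε * a' k| ≤ ε^2 * C k := by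
    intro ε hεδ k
    have hε2 : |ε| ≤ 1/2 := hεδ.trans (min_le_left _ _)
    have hεd : |ε| ≤ d/2 := hεδ.trans (min_le_right _ _)
    have hεabs := abs_nonneg ε
    have hB := hBpos (k+1)
    have hFpos : (0:ℝ) < ((k+1).factorial : ℝ) := by positivity
    have hpc := hpcpos (k+1)
    have hD0ne' : poch (1-μ) (k+1) ≠ 0 := hD0ne (k+1)
    have hD0abs : 0 < |poch (1-μ) (k+1)| := abs_pos.mpr hD0ne'
    -- lower bound on the factors of Dε
    have hlow : ∀ j : ℕ, |1-μ+(j:ℝ)|/2 ≤ |1-μ+ε+(j:ℝ)| := by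
      intro j
      have h1 := hdle j
      have key : (1-μ+(j:ℝ)) = (1-μ+ε+(j:ℝ)) - ε := by ring
      have h2 : |1-μ+(j:ℝ)| ≤ |1-μ+ε+(j:ℝ)| + |ε| := by
        rw [key]; exact abs_sub _ _
      linarith
    have hDεabs : |poch (1-μ) (k+1)|/2^(k+1) ≤ |poch (1-μ+ε) (k+1)| := by
      rw [abs_poch, abs_poch]
      calc (∏ j ∈ Finset.range (k+1), |1-μ+(j:ℝ)|)/2^(k+1)
          = ∏ j ∈ Finset.range (k+1), (|1-μ+(j:ℝ)|/2) := by
            rw [Finset.prod_div_distrib, Finset.prod_const, Finset.card_range]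
        _ ≤ ∏ j ∈ Finset.range (k+1), |1-μ+ε+(j:ℝ)| :=
            Finset.prod_le_prod (fun j _ => by positivity) (fun j _ => hlow j)
    have hDεne : poch (1-μ+ε) (k+1) ≠ 0 := by
      have : (0:ℝ) < |poch (1-μ+ε) (k+1)| :=
        lt_of_lt_of_le (by positivity) hDεabs
      exact abs_pos.mp this
    -- the key algebraic identity
    have key : poch ε (k+1) * χ^(k+1) /
          (poch (1-μ+ε) (k+1) * poch (1+ν) (k+1) * ((k+1).factorial : ℝ))
        - ε * a' k
        = ε * χ^(k+1) * (poch (ε+1) k * poch (1-μ) (k+1)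
            - (k.factorial : ℝ) * poch (1-μ+ε) (k+1)) /
          (poch (1-μ+ε) (k+1) * (poch (1-μ) (k+1)
            * (poch (1+ν) (k+1) * ((k+1).factorial : ℝ)))) := by
      rw [ha'def]
      simp only
      rw [poch_succ' ε k]
      field_simp
    -- the three product-difference bounds
    have h1 : |poch (ε+1) k - (k.factorial : ℝ)| ≤ |ε| * k * ((k+1).factorial : ℝ) := by
      have hres := prod_diff_le k (fun j => (ε+1)+(j:ℝ)) (fun j => (1:ℝ)+(j:ℝ))
        (fun j => (2:ℝ)+(j:ℝ)) |ε| (abs_nonneg ε)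
        (fun j => by
          show (1:ℝ) ≤ 2+(j:ℝ)
          have := Nat.cast_nonneg (α := ℝ) j; linarith)
        (fun j => by
          show |(ε+1)+(j:ℝ)| ≤ 2+(j:ℝ)
          have e : (ε+1)+(j:ℝ) = ε + (1+(j:ℝ)) := by ring
          rw [e]
          have := Nat.cast_nonneg (α := ℝ) j
          calc |ε + (1+(j:ℝ))| ≤ |ε| + |1+(j:ℝ)| := abs_add_le _ _
            _ ≤ 1/2 + (1+(j:ℝ)) := by
              rw [abs_of_nonneg (by linarith : (0:ℝ) ≤ 1+(j:ℝ))]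
              linarith
            _ ≤ 2+(j:ℝ) := by linarith)
        (fun j => by
          show |(1:ℝ)+(j:ℝ)| ≤ 2+(j:ℝ)
          have := Nat.cast_nonneg (α := ℝ) j
          rw [abs_of_nonneg (by linarith : (0:ℝ) ≤ 1+(j:ℝ))]
          linarith)
        (fun j => by
          show |((ε+1)+(j:ℝ)) - (1+(j:ℝ))| ≤ |ε|
          have e : ((ε+1)+(j:ℝ)) - (1+(j:ℝ)) = ε := by ring
          rw [e])
      have e1 : (∏ j ∈ Finset.range k, ((ε+1)+(j:ℝ))) = poch (ε+1) k := rfl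
      have e2 : (∏ j ∈ Finset.range k, ((1:ℝ)+(j:ℝ))) = (k.factorial : ℝ) := by
        rw [← poch_one k]; rfl
      have e3 : (∏ j ∈ Finset.range k, ((2:ℝ)+(j:ℝ))) = ((k+1).factorial : ℝ) := by
        rw [← poch_two k]; rfl
      rwa [e1, e2, e3] at hres
    have h2 : |poch (1-μ) (k+1) - poch (1-μ+ε) (k+1)| ≤ |ε| * (k+1) * poch c (k+1) := by
      have hres := prod_diff_le (k+1) (fun j => (1-μ)+(j:ℝ)) (fun j => (1-μ+ε)+(j:ℝ))
        (fun j => c+(j:ℝ)) |ε| (abs_nonneg ε)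
        (fun j => by
          show (1:ℝ) ≤ c+(j:ℝ)
          have := Nat.cast_nonneg (α := ℝ) j; linarith)
        (fun j => by
          show |(1-μ)+(j:ℝ)| ≤ c+(j:ℝ)
          have := Nat.cast_nonneg (α := ℝ) j
          calc |(1-μ)+(j:ℝ)| ≤ |1-μ| + |(j:ℝ)| := abs_add_le _ _
            _ ≤ c+(j:ℝ) := by rw [Nat.abs_cast, hcdef]; linarith)
        (fun j => by
          show |(1-μ+ε)+(j:ℝ)| ≤ c+(j:ℝ)
          have := Nat.cast_nonneg (α := ℝ) j
          have e : (1-μ+ε)+(j:ℝ) = (1-μ) + (ε + (j:ℝ)) := by ring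
          calc |(1-μ+ε)+(j:ℝ)| ≤ |1-μ| + |ε+(j:ℝ)| := by rw [e]; exact abs_add_le _ _
            _ ≤ |1-μ| + (|ε| + |(j:ℝ)|) := by linarith [abs_add_le ε (j:ℝ)]
            _ ≤ c+(j:ℝ) := by rw [Nat.abs_cast, hcdef]; linarith)
        (fun j => by
          show |((1-μ)+(j:ℝ)) - ((1-μ+ε)+(j:ℝ))| ≤ |ε|
          have e : ((1-μ)+(j:ℝ)) - ((1-μ+ε)+(j:ℝ)) = -ε := by ring
          rw [e, abs_neg])
      have e1 : (∏ j ∈ Finset.range (k+1), ((1-μ)+(j:ℝ))) = poch (1-μ) (k+1) := rfl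
      have e2 : (∏ j ∈ Finset.range (k+1), ((1-μ+ε)+(j:ℝ))) = poch (1-μ+ε) (k+1) := rfl
      have e3 : (∏ j ∈ Finset.range (k+1), (c+(j:ℝ))) = poch c (k+1) := rfl
      rw [e1, e2, e3] at hres
      calc |poch (1-μ) (k+1) - poch (1-μ+ε) (k+1)| ≤ |ε| * ((k+1 : ℕ):ℝ) * poch c (k+1) := hres
        _ = |ε| * ((k:ℝ)+1) * poch c (k+1) := by push_cast; ring
    -- bound on the numerator
    have hFk : ((k+1).factorial : ℝ) = ((k:ℝ)+1) * (k.factorial : ℝ) := by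
      rw [Nat.factorial_succ]; push_cast; ring
    have hNb : |poch (ε+1) k * poch (1-μ) (k+1) - (k.factorial : ℝ) * poch (1-μ+ε) (k+1)|
        ≤ |ε| * (2*((k:ℝ)+1)) * (((k+1).factorial : ℝ) * poch c (k+1)) := by
      have e : poch (ε+1) k * poch (1-μ) (k+1) - (k.factorial : ℝ) * poch (1-μ+ε) (k+1)
          = (poch (ε+1) k - (k.factorial : ℝ)) * poch (1-μ) (k+1)
            + (k.factorial : ℝ) * (poch (1-μ) (k+1) - poch (1-μ+ε) (k+1)) := by ring
      rw [e]
      have hkfac : (0:ℝ) ≤ (k.factorial : ℝ) := by positivity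
      calc |(poch (ε+1) k - (k.factorial : ℝ)) * poch (1-μ) (k+1)
            + (k.factorial : ℝ) * (poch (1-μ) (k+1) - poch (1-μ+ε) (k+1))|
          ≤ |poch (ε+1) k - (k.factorial : ℝ)| * |poch (1-μ) (k+1)|
            + (k.factorial : ℝ) * |poch (1-μ) (k+1) - poch (1-μ+ε) (k+1)| := by
            refine le_trans (abs_add_le _ _) ?_
            rw [abs_mul, abs_mul, abs_of_nonneg hkfac]
        _ ≤ (|ε| * k * ((k+1).factorial : ℝ)) * poch c (k+1)
            + (k.factorial : ℝ) * (|ε| * ((k:ℝ)+1) * poch c (k+1)) := by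
            refine add_le_add ?_ ?_
            · exact mul_le_mul h1 (habsD0le (k+1)) (abs_nonneg _) (by positivity)
            · exact mul_le_mul_of_nonneg_left h2 hkfac
        _ ≤ |ε| * (2*((k:ℝ)+1)) * (((k+1).factorial : ℝ) * poch c (k+1)) := by
            have hk0 : (0:ℝ) ≤ (k:ℝ) := Nat.cast_nonneg k
            nlinarith [mul_nonneg (mul_nonneg hεabs hFpos.le) hpc.le,
              mul_nonneg hεabs hpc.le]
    -- put it together
    rw [key]
    have habseq : |ε * χ^(k+1) * (poch (ε+1) k * poch (1-μ) (k+1)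
            - (k.factorial : ℝ) * poch (1-μ+ε) (k+1)) /
          (poch (1-μ+ε) (k+1) * (poch (1-μ) (k+1)
            * (poch (1+ν) (k+1) * ((k+1).factorial : ℝ))))|
        = |ε| * χ^(k+1) * |poch (ε+1) k * poch (1-μ) (k+1)
            - (k.factorial : ℝ) * poch (1-μ+ε) (k+1)| /
          (|poch (1-μ+ε) (k+1)| * (|poch (1-μ) (k+1)|
            * (poch (1+ν) (k+1) * ((k+1).factorial : ℝ)))) := by
      rw [abs_div, abs_mul, abs_mul, abs_mul, abs_mul, abs_mul,
        abs_of_nonneg (pow_nonneg hχ (k+1)), abs_of_pos hB, abs_of_pos hFpos]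
    rw [habseq]
    have hstep : |ε| * χ^(k+1) * |poch (ε+1) k * poch (1-μ) (k+1)
            - (k.factorial : ℝ) * poch (1-μ+ε) (k+1)| /
          (|poch (1-μ+ε) (k+1)| * (|poch (1-μ) (k+1)|
            * (poch (1+ν) (k+1) * ((k+1).factorial : ℝ))))
        ≤ (|ε| * χ^(k+1) * (|ε| * (2*((k:ℝ)+1)) * (((k+1).factorial : ℝ) * poch c (k+1)))) /
          ((|poch (1-μ) (k+1)|/2^(k+1)) * (|poch (1-μ) (k+1)|
            * (poch (1+ν) (k+1) * ((k+1).factorial : ℝ)))) := by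
      refine div_le_div₀ (by positivity) ?_ (by positivity) ?_
      · have h0 : 0 ≤ |ε| * χ^(k+1) := by positivity
        exact mul_le_mul_of_nonneg_left hNb h0
      · exact mul_le_mul_of_nonneg_right hDεabs (by positivity)
    refine le_trans hstep (le_of_eq ?_)
    rw [hCdef]
    simp only
    have h2ne : ((2:ℝ))^(k+1) ≠ 0 := by positivity
    field_simp
    ring_nf
    simp only [sq_abs]
    ring_nf
  -- Gamma facts and termwise identification of the ₂F₃ series
  have hΓμ : Real.Gamma (1-μ) ≠ 0 := by
    refine Real.Gamma_ne_zero (fun m => ?_)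
    intro h
    exact hμ m (by linarith)
  have hΓν : Real.Gamma (1+ν) ≠ 0 := (Real.Gamma_pos_of_pos hνpos).ne'
  have htm : ∀ m : ℕ, χ * Real.Gamma (1-μ) * Real.Gamma (1+ν) *
      (poch 1 m * poch 1 m * χ^m /
        (Real.Gamma (2+(m:ℝ)) * Real.Gamma (2-μ+(m:ℝ)) * Real.Gamma (2+ν+(m:ℝ)) *
          (m.factorial : ℝ))) = a' m := by
    intro m
    have e1 : (2:ℝ)+(m:ℝ) = (((m+1:ℕ)):ℝ)+1 := by push_cast; ring
    have g1 : Real.Gamma (2+(m:ℝ)) = ((m+1).factorial : ℝ) := by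
      rw [e1, Real.Gamma_nat_eq_factorial]
    have e2 : (2:ℝ)-μ+(m:ℝ) = (1-μ) + (((m+1:ℕ)):ℝ) := by push_cast; ring
    have g2 : Real.Gamma (2-μ+(m:ℝ)) = poch (1-μ) (m+1) * Real.Gamma (1-μ) := by
      rw [e2, Gamma_add_nat _ _ (fun j _ => hμj j)]
    have e3 : (2:ℝ)+ν+(m:ℝ) = (1+ν) + (((m+1:ℕ)):ℝ) := by push_cast; ring
    have g3 : Real.Gamma (2+ν+(m:ℝ)) = poch (1+ν) (m+1) * Real.Gamma (1+ν) := by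
      rw [e3, Gamma_add_nat _ _ (fun j _ => (hνj j).ne')]
    rw [g1, g2, g3, poch_one, ha'def]
    simp only
    have hD := hD0ne (m+1)
    have hBm := (hBpos (m+1)).ne'
    have hf1 : ((m.factorial : ℕ) : ℝ) ≠ 0 := by positivity
    have hf2 : (((m+1).factorial : ℕ) : ℝ) ≠ 0 := by positivity
    field_simp
    ring
  -- final assembly
  rw [isBigO_iff]
  refine ⟨∑' k, C k, ?_⟩
  have hev : ∀ᶠ ε : ℝ in nhds 0, |ε| ≤ δ := by
    filter_upwards [Metric.closedBall_mem_nhds (0:ℝ) hδ0] with ε hε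
    simpa [Real.dist_eq] using hε
  filter_upwards [hev] with ε hε
  have hε2 : |ε| ≤ 1/2 := hε.trans (min_le_left _ _)
  have hεsq : ε^2 ≤ 1 := by nlinarith [sq_abs ε, abs_nonneg ε]
  have hbound : ∀ k : ℕ, ε^2 * C k ≤ C k := by
    intro k
    calc ε^2 * C k ≤ 1 * C k := mul_le_mul_of_nonneg_right hεsq (hC0 k)
      _ = C k := one_mul _
  have hdiffsum : Summable (fun k : ℕ => poch ε (k+1) * χ^(k+1) /
      (poch (1-μ+ε) (k+1) * poch (1+ν) (k+1) * ((k+1).factorial : ℝ)) - ε * a' k) := by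
    refine Summable.of_norm_bounded hCsum ?_
    intro k
    rw [Real.norm_eq_abs]
    exact (hkey ε hε k).trans (hbound k)
  have htermsum : Summable (fun k : ℕ => poch ε (k+1) * χ^(k+1) /
      (poch (1-μ+ε) (k+1) * poch (1+ν) (k+1) * ((k+1).factorial : ℝ))) := by
    have h := hdiffsum.add (ha'sum.mul_left ε)
    refine h.congr ?_
    intro k
    ring
  have hfull : Summable (fun n : ℕ => poch ε n * χ^n /
      (poch (1-μ+ε) n * poch (1+ν) n * (n.factorial : ℝ))) := by
    rw [← summable_nat_add_iff 1]
    exact htermsum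
  have hS : (∑' n : ℕ, poch ε n * χ^n /
      (poch (1-μ+ε) n * poch (1+ν) n * (n.factorial : ℝ)))
      = 1 + ∑' k : ℕ, poch ε (k+1) * χ^(k+1) /
          (poch (1-μ+ε) (k+1) * poch (1+ν) (k+1) * ((k+1).factorial : ℝ)) := by
    rw [hfull.tsum_eq_zero_add]
    simp [poch_zero]
  have hT : ε * χ * Real.Gamma (1-μ) * Real.Gamma (1+ν) *
      (∑' n : ℕ, poch 1 n * poch 1 n * χ^n /
        (Real.Gamma (2+(n:ℝ)) * Real.Gamma (2-μ+(n:ℝ)) * Real.Gamma (2+ν+(n:ℝ)) *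
          (n.factorial : ℝ)))
      = ε * ∑' m : ℕ, a' m := by
    have step : (χ * Real.Gamma (1-μ) * Real.Gamma (1+ν)) *
        (∑' n : ℕ, poch 1 n * poch 1 n * χ^n /
          (Real.Gamma (2+(n:ℝ)) * Real.Gamma (2-μ+(n:ℝ)) * Real.Gamma (2+ν+(n:ℝ)) *
            (n.factorial : ℝ))) = ∑' m : ℕ, a' m := by
      rw [← tsum_mul_left]
      exact tsum_congr htm
    calc ε * χ * Real.Gamma (1-μ) * Real.Gamma (1+ν) * (∑' n : ℕ, poch 1 n * poch 1 n * χ^n /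
          (Real.Gamma (2+(n:ℝ)) * Real.Gamma (2-μ+(n:ℝ)) * Real.Gamma (2+ν+(n:ℝ)) *
            (n.factorial : ℝ)))
        = ε * ((χ * Real.Gamma (1-μ) * Real.Gamma (1+ν)) * (∑' n : ℕ, poch 1 n * poch 1 n * χ^n /
          (Real.Gamma (2+(n:ℝ)) * Real.Gamma (2-μ+(n:ℝ)) * Real.Gamma (2+ν+(n:ℝ)) *
            (n.factorial : ℝ)))) := by ring
      _ = ε * ∑' m : ℕ, a' m := by rw [step]
  rw [hS, hT]
  have e : 1 + (∑' k : ℕ, poch ε (k+1) * χ^(k+1) /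
        (poch (1-μ+ε) (k+1) * poch (1+ν) (k+1) * ((k+1).factorial : ℝ)))
      - 1 - ε * ∑' m : ℕ, a' m
      = (∑' k : ℕ, poch ε (k+1) * χ^(k+1) /
          (poch (1-μ+ε) (k+1) * poch (1+ν) (k+1) * ((k+1).factorial : ℝ)))
        - ∑' k : ℕ, ε * a' k := by
    rw [tsum_mul_left]
    ring
  rw [e, ← htermsum.tsum_sub (ha'sum.mul_left ε)]
  have hnormsum : Summable (fun k : ℕ => ‖poch ε (k+1) * χ^(k+1) /
      (poch (1-μ+ε) (k+1) * poch (1+ν) (k+1) * ((k+1).factorial : ℝ)) - ε * a' k‖) := by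
    refine Summable.of_nonneg_of_le (fun k => norm_nonneg _) (fun k => ?_) hCsum
    rw [Real.norm_eq_abs]
    exact (hkey ε hε k).trans (hbound k)
  calc ‖∑' k : ℕ, (poch ε (k+1) * χ^(k+1) /
        (poch (1-μ+ε) (k+1) * poch (1+ν) (k+1) * ((k+1).factorial : ℝ)) - ε * a' k)‖
      ≤ ∑' k : ℕ, ‖poch ε (k+1) * χ^(k+1) /
        (poch (1-μ+ε) (k+1) * poch (1+ν) (k+1) * ((k+1).factorial : ℝ)) - ε * a' k‖ :=
        norm_tsum_le_tsum_norm hnormsum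
    _ ≤ ∑' k : ℕ, ε^2 * C k := by
        refine Summable.tsum_le_tsum (fun k => ?_) hnormsum (hCsum.mul_left _)
        rw [Real.norm_eq_abs]
        exact hkey ε hε k
    _ = ε^2 * ∑' k, C k := tsum_mul_left
    _ = (∑' k, C k) * ‖ε^2‖ := by
        rw [Real.norm_eq_abs, abs_of_nonneg (sq_nonneg ε)]
        ring
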